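/- Let f : Fin M → ℝ^N with indices partitioned into K pairwise disjoint pools I_1, …, I_K, each of cardinality L, and let P₂ : ℝ^N → ℝ^K be the ℓ² pooling operator (P₂ x)_k = (∑_{j∈I_k} ⟨x, f_j⟩²)^{1/2}. Let Q₂ be the collection of all families f' obtained from f by replacing, for each pool k, the vectors (f_j)_{j∈I_k} by (U_k applied to them), i.e., enumerating I_k = {j_1,…,j_L}, f'_{j_a} = ∑_{b=1}^L (U_k)_{a,b} f_{j_b} for some orthogonal L×L matrix U_k. Then for all x, x' ∈ ℝ^N, A₂ · d(x,x') ≤ ‖P₂(x) − P₂(x')‖₂, where A₂ = inf over F' ∈ Q₂ of the minimum over Ω ⊆ Fin M of sqrt(λ₋(F'_Ω)² + λ₋(F'_{Ωᶜ})²). -/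

import Mathlib

open scoped BigOperators RealInnerProductSpace
open Finset Matrix

noncomputable section

/-- Lower frame bound of the subfamily of `g` indexed by `Ω`. -/
def lowerFrameBound {N M : ℕ} (g : Fin M → EuclideanSpace ℝ (Fin N))
    (Ω : Finset (Fin M)) : ℝ :=
  sSup {c : ℝ | 0 ≤ c ∧ ∀ x : EuclideanSpace ℝ (Fin N),
    c * ‖x‖ ≤ Real.sqrt (∑ i ∈ Ω, ⟪x, g i⟫ ^ 2)}

/-- Sign-invariant distance `d(x,x') = min(‖x−x'‖, ‖x+x'‖)`. -/
def sdist {N : ℕ} (x x' : EuclideanSpace ℝ (Fin N)) : ℝ :=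
  min ‖x - x'‖ ‖x + x'‖

/-- The ℓ² pooling operator: `(P₂ x)_k = (∑_{j∈I_k} ⟨x, f_j⟩²)^{1/2}`. -/
def pool2 {N M K : ℕ} (f : Fin M → EuclideanSpace ℝ (Fin N))
    (I : Fin K → Finset (Fin M)) (x : EuclideanSpace ℝ (Fin N)) : Fin K → ℝ :=
  fun k => Real.sqrt (∑ j ∈ I k, ⟪x, f j⟫ ^ 2)

/-- `f'` is obtained from `f` by applying, in each pool `I_k` (enumerated by `e k`),
an orthogonal `L×L` matrix `U_k` to the vectors of the pool. -/
def InQ2 {N M K L : ℕ} (f f' : Fin M → EuclideanSpace ℝ (Fin N))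
    (I : Fin K → Finset (Fin M)) : Prop :=
  ∃ (e : Fin K → Fin L → Fin M) (U : Fin K → Matrix (Fin L) (Fin L) ℝ),
    (∀ k, Function.Injective (e k)) ∧
    (∀ k a, e k a ∈ I k) ∧
    (∀ k, (U k)ᵀ * U k = 1) ∧
    (∀ k a, f' (e k a) = ∑ b, U k a b • f (e k b))



lemma zero_mem_lfbSet {N M : ℕ} (g : Fin M → EuclideanSpace ℝ (Fin N)) (Ω : Finset (Fin M)) :
    (0:ℝ) ∈ {c : ℝ | 0 ≤ c ∧ ∀ x : EuclideanSpace ℝ (Fin N),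
      c * ‖x‖ ≤ Real.sqrt (∑ i ∈ Ω, ⟪x, g i⟫ ^ 2)} :=
  ⟨le_refl 0, fun x => by simpa using Real.sqrt_nonneg _⟩

lemma lfb_nonneg {N M : ℕ} (g : Fin M → EuclideanSpace ℝ (Fin N)) (Ω : Finset (Fin M)) :
    0 ≤ lowerFrameBound g Ω := by
  by_cases hb : BddAbove {c : ℝ | 0 ≤ c ∧ ∀ x : EuclideanSpace ℝ (Fin N),
      c * ‖x‖ ≤ Real.sqrt (∑ i ∈ Ω, ⟪x, g i⟫ ^ 2)}
  · exact le_csSup hb (zero_mem_lfbSet g Ω)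
  · unfold lowerFrameBound
    rw [Real.sSup_of_not_bddAbove hb]

lemma lfb_spec {N M : ℕ} (g : Fin M → EuclideanSpace ℝ (Fin N)) (Ω : Finset (Fin M))
    (y : EuclideanSpace ℝ (Fin N)) :
    lowerFrameBound g Ω * ‖y‖ ≤ Real.sqrt (∑ i ∈ Ω, ⟪y, g i⟫ ^ 2) := by
  set S := {c : ℝ | 0 ≤ c ∧ ∀ x : EuclideanSpace ℝ (Fin N),
      c * ‖x‖ ≤ Real.sqrt (∑ i ∈ Ω, ⟪x, g i⟫ ^ 2)} with hS
  by_cases hb : BddAbove S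
  · rcases eq_or_lt_of_le (norm_nonneg y) with h0 | hpos
    · rw [← h0, mul_zero]
      exact Real.sqrt_nonneg _
    · have h1 : lowerFrameBound g Ω ≤ Real.sqrt (∑ i ∈ Ω, ⟪y, g i⟫ ^ 2) / ‖y‖ := by
        apply csSup_le ⟨0, zero_mem_lfbSet g Ω⟩
        intro c hc
        exact (le_div_iff₀ hpos).mpr (hc.2 y)
      exact (le_div_iff₀ hpos).mp h1
  · unfold lowerFrameBound
    rw [Real.sSup_of_not_bddAbove hb, zero_mul]
    exact Real.sqrt_nonneg _


lemma sum_sq_eq_normsq {L : ℕ} (x : EuclideanSpace ℝ (Fin L)) :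
    ∑ i, x i ^ 2 = ‖x‖ ^ 2 := by
  rw [EuclideanSpace.norm_eq, Real.sq_sqrt (by positivity)]
  simp [Real.norm_eq_abs, sq_abs]

lemma exists_isometry {L : ℕ} (a b : EuclideanSpace ℝ (Fin L)) :
    ∃ (T : EuclideanSpace ℝ (Fin L) ≃ₗᵢ[ℝ] EuclideanSpace ℝ (Fin L)) (ε : Fin L → ℝ),
      (∀ i, ε i = 1 ∨ ε i = -1) ∧
      ∑ i, (T a i - ε i * T b i) ^ 2 = (‖a‖ - ‖b‖) ^ 2 := by
  by_cases ha : a = 0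
  · refine ⟨LinearIsometryEquiv.refl ℝ _, fun _ => 1, fun _ => Or.inl rfl, ?_⟩
    subst ha
    simp only [LinearIsometryEquiv.coe_refl, id_eq, norm_zero]
    have h1 : ∀ i, ((0 : EuclideanSpace ℝ (Fin L)) i - 1 * b i) ^ 2 = b i ^ 2 := by
      intro i
      have h0 : (0 : EuclideanSpace ℝ (Fin L)) i = 0 := rfl
      rw [h0]; ring
    rw [Finset.sum_congr rfl fun i _ => h1 i, sum_sq_eq_normsq]
    ring
  by_cases hdep : ∃ t : ℝ, b = t • a
  · obtain ⟨t, rfl⟩ := hdep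
    refine ⟨LinearIsometryEquiv.refl ℝ _, fun _ => if 0 ≤ t then 1 else -1,
      fun _ => by split <;> simp, ?_⟩
    have hsign : (if 0 ≤ t then (1:ℝ) else -1) * t = |t| := by
      by_cases h : 0 ≤ t
      · rw [if_pos h, one_mul, abs_of_nonneg h]
      · rw [if_neg h, abs_of_neg (lt_of_not_ge h)]; ring
    have hpt : ∀ i, ((a : EuclideanSpace ℝ (Fin L)) i
        - (if 0 ≤ t then (1:ℝ) else -1) * (t • a) i) ^ 2 = ((1 - |t|) * a i) ^ 2 := by
      intro i
      have : (t • a) i = t * a i := rfl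
      rw [this, ← mul_assoc, hsign]
      ring
    show ∑ i, ((a : EuclideanSpace ℝ (Fin L)) i
        - (if 0 ≤ t then (1:ℝ) else -1) * (t • a) i) ^ 2 = (‖a‖ - ‖t • a‖) ^ 2
    calc ∑ i, ((a : EuclideanSpace ℝ (Fin L)) i
          - (if 0 ≤ t then (1:ℝ) else -1) * (t • a) i) ^ 2
        = ∑ i, ((1 - |t|) * a i) ^ 2 := by exact Finset.sum_congr rfl fun i _ => hpt i
      _ = (1 - |t|) ^ 2 * ∑ i, a i ^ 2 := by
            rw [Finset.mul_sum]
            exact Finset.sum_congr rfl fun i _ => by ring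
      _ = (1 - |t|) ^ 2 * ‖a‖ ^ 2 := by rw [sum_sq_eq_normsq]
      _ = (‖a‖ - ‖t • a‖) ^ 2 := by rw [norm_smul]; simp [Real.norm_eq_abs]; ring
  · -- independent case
    have hb0 : b ≠ 0 := fun h => hdep ⟨0, by simp [h]⟩
    have hA : (0:ℝ) < ‖a‖ := norm_pos_iff.mpr ha
    have hB : (0:ℝ) < ‖b‖ := norm_pos_iff.mpr hb0
    set A := ‖a‖ with hA_def
    set B := ‖b‖ with hB_def
    set u : EuclideanSpace ℝ (Fin L) := A⁻¹ • a with hu_def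
    set v : EuclideanSpace ℝ (Fin L) := B⁻¹ • b with hv_def
    have hu1 : ‖u‖ = 1 := by
      rw [hu_def, norm_smul, Real.norm_eq_abs, abs_of_pos (inv_pos.mpr hA),
        inv_mul_cancel₀ hA.ne']
    have hv1 : ‖v‖ = 1 := by
      rw [hv_def, norm_smul, Real.norm_eq_abs, abs_of_pos (inv_pos.mpr hB),
        inv_mul_cancel₀ hB.ne']
    have hau : A • u = a := by rw [hu_def, smul_smul, mul_inv_cancel₀ hA.ne', one_smul]
    have hbv : B • v = b := by rw [hv_def, smul_smul, mul_inv_cancel₀ hB.ne', one_smul]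
    have huv : u ≠ v := by
      intro h
      exact hdep ⟨B * A⁻¹, by rw [← hbv, ← h, hu_def, smul_smul]⟩
    have huv' : u ≠ -v := by
      intro h
      have hv' : v = -u := by rw [h, neg_neg]
      exact hdep ⟨-(B * A⁻¹), by rw [← hbv, hv', hu_def, smul_neg, smul_smul, ← neg_smul]⟩
    have hw0 : u + v ≠ 0 := fun h => huv' (by rw [add_eq_zero_iff_eq_neg] at h; exact h)
    have hz0 : u - v ≠ 0 := fun h => huv (by rwa [sub_eq_zero] at h)
    have hnw : (0:ℝ) < ‖u + v‖ := norm_pos_iff.mpr hw0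
    have hnz : (0:ℝ) < ‖u - v‖ := norm_pos_iff.mpr hz0
    set w : EuclideanSpace ℝ (Fin L) := ‖u + v‖⁻¹ • (u + v) with hw_def
    set z : EuclideanSpace ℝ (Fin L) := ‖u - v‖⁻¹ • (u - v) with hz_def
    have hw1 : ‖w‖ = 1 := by
      rw [hw_def, norm_smul, Real.norm_eq_abs, abs_of_pos (inv_pos.mpr hnw),
        inv_mul_cancel₀ hnw.ne']
    have hz1 : ‖z‖ = 1 := by
      rw [hz_def, norm_smul, Real.norm_eq_abs, abs_of_pos (inv_pos.mpr hnz),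
        inv_mul_cancel₀ hnz.ne']
    have hinner0 : ⟪u + v, u - v⟫ = 0 := by
      rw [inner_sub_right, inner_add_left, inner_add_left, real_inner_comm v u,
        real_inner_self_eq_norm_sq, real_inner_self_eq_norm_sq, hu1, hv1]
      ring
    have hwz : ⟪w, z⟫ = 0 := by
      rw [hw_def, hz_def, real_inner_smul_left, real_inner_smul_right, hinner0]
      ring
    have hzw : ⟪z, w⟫ = 0 := by rw [real_inner_comm]; exact hwz
    have hww : ⟪w, w⟫ = (1:ℝ) := by rw [real_inner_self_eq_norm_sq, hw1]; norm_num
    have hzz : ⟪z, z⟫ = (1:ℝ) := by rw [real_inner_self_eq_norm_sq, hz1]; norm_num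
    -- L ≥ 2
    have hwzind : LinearIndependent ℝ ![w, z] := by
      have : Orthonormal ℝ ![w, z] := by
        rw [orthonormal_iff_ite]
        intro i j
        fin_cases i <;> fin_cases j <;>
          simp [hww, hzz, hwz, hzw, hw1, hz1]
      exact this.linearIndependent
    have hL2 : 2 ≤ L := by
      have h1 := hwzind.fintype_card_le_finrank
      simpa using h1
    set i0 : Fin L := ⟨0, by omega⟩ with hi0_def
    set i1 : Fin L := ⟨1, by omega⟩ with hi1_def
    have hne01 : i0 ≠ i1 := by simp [hi0_def, hi1_def, Fin.ext_iff]
    set vv : Fin L → EuclideanSpace ℝ (Fin L) := fun i => if i = i0 then w else z with hvv_def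
    have hvv0 : vv i0 = w := by simp [hvv_def]
    have hvv1 : vv i1 = z := by simp [hvv_def, hne01.symm]
    set s : Set (Fin L) := {i0, i1} with hs_def
    have key : ∀ i ∈ s, ∀ j ∈ s, ⟪vv i, vv j⟫ = if i = j then (1:ℝ) else 0 := by
      intro i hi j hj
      simp only [hs_def, Set.mem_insert_iff, Set.mem_singleton_iff] at hi hj
      rcases hi with rfl | rfl <;> rcases hj with rfl | rfl <;>
        simp [hvv0, hvv1, hww, hzz, hwz, hzw, hne01, hne01.symm, hw1, hz1]
    have hortho : Orthonormal ℝ (s.restrict vv) := by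
      rw [orthonormal_iff_ite]
      rintro ⟨i, hi⟩ ⟨j, hj⟩
      have hk := key i hi j hj
      simp only [Subtype.mk.injEq]
      exact hk
    obtain ⟨bb, hbb⟩ := hortho.exists_orthonormalBasis_extension_of_card_eq
      (by simp) 
    have hbw : bb i0 = w := hbb i0 (by left; rfl)
    have hbz : bb i1 = z := hbb i1 (by right; rfl)
    set T := bb.repr with hT_def
    have hTw : T w = EuclideanSpace.single i0 (1:ℝ) := by
      rw [hT_def, ← hbw]; exact bb.repr_self i0
    have hTz : T z = EuclideanSpace.single i1 (1:ℝ) := by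
      rw [hT_def, ← hbz]; exact bb.repr_self i1
    clear_value w z
    refine ⟨T, fun i => if i = i1 then (-1:ℝ) else 1, fun i => by by_cases h : i = i1 <;> simp [h], ?_⟩
    set α : ℝ := ‖u + v‖ / 2 with hα_def
    set β : ℝ := ‖u - v‖ / 2 with hβ_def
    have h1 : α • w = (2:ℝ)⁻¹ • (u + v) := by
      rw [hw_def, smul_smul]
      congr 1
      rw [hα_def]
      field_simp
    have h2 : β • z = (2:ℝ)⁻¹ • (u - v) := by
      rw [hz_def, smul_smul]
      congr 1
      rw [hβ_def]
      field_simp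
    have hu_eq : α • w + β • z = u := by rw [h1, h2]; module
    have hv_eq : α • w - β • z = v := by rw [h1, h2]; module
    have hTu : T u = α • EuclideanSpace.single i0 (1:ℝ) + β • EuclideanSpace.single i1 1 := by
      rw [← hu_eq, map_add, _root_.map_smul, _root_.map_smul, hTw, hTz]
    have hTv : T v = α • EuclideanSpace.single i0 (1:ℝ) - β • EuclideanSpace.single i1 1 := by
      rw [← hv_eq, map_sub, _root_.map_smul, _root_.map_smul, hTw, hTz]
    have hptw : ∀ i, (if i = i1 then (-1:ℝ) else 1) * T v i = T u i := by
      intro i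
      rw [hTu, hTv]
      by_cases h : i = i1
      · subst h
        simp [EuclideanSpace.single_apply, hne01.symm, PiLp.add_apply, PiLp.sub_apply,
          PiLp.smul_apply, smul_eq_mul]
      · simp [EuclideanSpace.single_apply, h, PiLp.add_apply, PiLp.sub_apply,
          PiLp.smul_apply, smul_eq_mul]
    have hTa : ∀ i, T a i = A * T u i := by
      intro i
      rw [← hau, _root_.map_smul]
      rfl
    have hTb : ∀ i, T b i = B * T v i := by
      intro i
      rw [← hbv, _root_.map_smul]
      rfl
    have hTunorm : ∑ i, T u i ^ 2 = 1 := by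
      rw [sum_sq_eq_normsq, T.norm_map, hu1]
      norm_num
    calc ∑ i, (T a i - (if i = i1 then (-1:ℝ) else 1) * T b i) ^ 2
        = ∑ i, ((A - B) * T u i) ^ 2 := by
          refine Finset.sum_congr rfl fun i _ => ?_
          rw [hTa, hTb, ← mul_assoc, mul_comm _ B, mul_assoc, hptw]
          ring
      _ = (A - B) ^ 2 * ∑ i, T u i ^ 2 := by
          rw [Finset.mul_sum]
          exact Finset.sum_congr rfl fun i _ => by ring
      _ = (A - B) ^ 2 := by rw [hTunorm, mul_one]
      _ = (‖a‖ - ‖b‖) ^ 2 := rfl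

lemma exists_good_matrix {L : ℕ} (a b : Fin L → ℝ) :
    ∃ (U : Matrix (Fin L) (Fin L) ℝ) (ε : Fin L → ℝ),
      Uᵀ * U = 1 ∧ (∀ i, ε i = 1 ∨ ε i = -1) ∧
      ∑ i, (U.mulVec a i - ε i * U.mulVec b i) ^ 2
        = (Real.sqrt (∑ i, a i ^ 2) - Real.sqrt (∑ i, b i ^ 2)) ^ 2 := by
  set a' : EuclideanSpace ℝ (Fin L) := WithLp.toLp 2 a with ha'
  set b' : EuclideanSpace ℝ (Fin L) := WithLp.toLp 2 b with hb'
  obtain ⟨T, ε, hε, hsum⟩ := exists_isometry a' b'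
  set U : Matrix (Fin L) (Fin L) ℝ := Matrix.of (fun i j => T (EuclideanSpace.single j 1) i)
    with hU
  have hdecomp : ∀ c : Fin L → ℝ,
      (WithLp.toLp 2 c : EuclideanSpace ℝ (Fin L)) = ∑ j, c j • EuclideanSpace.single j (1:ℝ) := by
    intro c
    ext i
    rw [WithLp.ofLp_sum, Finset.sum_apply]
    simp [EuclideanSpace.single_apply]
  have hmul : ∀ (c : Fin L → ℝ) (i : Fin L),
      U.mulVec c i = T (WithLp.toLp 2 c : EuclideanSpace ℝ (Fin L)) i := by
    intro c i
    have step : T (WithLp.toLp 2 c : EuclideanSpace ℝ (Fin L)) i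
        = ∑ j, c j * T (EuclideanSpace.single j 1) i := by
      conv_lhs => rw [hdecomp c]
      rw [map_sum, WithLp.ofLp_sum, Finset.sum_apply]
      refine Finset.sum_congr rfl fun j _ => ?_
      rw [_root_.map_smul]
      rfl
    rw [step]
    simp only [Matrix.mulVec, dotProduct, hU, Matrix.of_apply]
    exact Finset.sum_congr rfl fun j _ => mul_comm _ _
  have hinner : ∀ x y : EuclideanSpace ℝ (Fin L), ⟪x, y⟫ = ∑ i, x i * y i := by
    intro x y
    rw [PiLp.inner_apply]
    simp [RCLike.inner_apply, conj_trivial]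
    exact Finset.sum_congr rfl fun _ _ => mul_comm _ _
  refine ⟨U, ε, ?_, hε, ?_⟩
  · ext i j
    rw [Matrix.mul_apply, Matrix.one_apply]
    have : ∀ k, Uᵀ i k * U k j
        = T (EuclideanSpace.single i 1) k * T (EuclideanSpace.single j 1) k := by
      intro k; rw [Matrix.transpose_apply]; rfl
    rw [Finset.sum_congr rfl fun k _ => this k]
    have h2 : ∑ k, T (EuclideanSpace.single i 1) k * T (EuclideanSpace.single j 1) k
        = ⟪T (EuclideanSpace.single i (1:ℝ)), T (EuclideanSpace.single j (1:ℝ))⟫ := by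
      rw [hinner]
    rw [h2, T.inner_map_map, EuclideanSpace.inner_single_left]
    simp [EuclideanSpace.single_apply, eq_comm]
  · have h1 : ∑ i, (U.mulVec a i - ε i * U.mulVec b i) ^ 2
        = ∑ i, (T a' i - ε i * T b' i) ^ 2 := by
      refine Finset.sum_congr rfl fun i _ => ?_
      rw [hmul a i, hmul b i]
    rw [h1, hsum]
    have hna : Real.sqrt (∑ i, a i ^ 2) = ‖a'‖ := by
      rw [show ∑ i, a i ^ 2 = ∑ i, a' i ^ 2 from rfl, sum_sq_eq_normsq,
        Real.sqrt_sq (norm_nonneg _)]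
    have hnb : Real.sqrt (∑ i, b i ^ 2) = ‖b'‖ := by
      rw [show ∑ i, b i ^ 2 = ∑ i, b' i ^ 2 from rfl, sum_sq_eq_normsq,
        Real.sqrt_sq (norm_nonneg _)]
    rw [hna, hnb]

/-- lower Lipschitz bound for the ℓ² pooling operator, with constant
`A₂ = inf_{F' ∈ Q₂} min_Ω sqrt(λ₋(F'_Ω)² + λ₋(F'_{Ωᶜ})²)`. -/
theorem pool2_lower_lipschitz {N M K L : ℕ} (f : Fin M → EuclideanSpace ℝ (Fin N))
    (I : Fin K → Finset (Fin M))
    (hdisj : ∀ k k', k ≠ k' → Disjoint (I k) (I k'))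
    (hcard : ∀ k, (I k).card = L)
    (hcover : ∀ j : Fin M, ∃ k, j ∈ I k) :
    ∀ x x' : EuclideanSpace ℝ (Fin N),
      sInf {r : ℝ | ∃ (f' : Fin M → EuclideanSpace ℝ (Fin N)) (Ω : Finset (Fin M)),
            InQ2 (L := L) f f' I ∧
            r = Real.sqrt (lowerFrameBound f' Ω ^ 2 + lowerFrameBound f' Ωᶜ ^ 2)}
          * sdist x x'
        ≤ Real.sqrt (∑ k, (pool2 f I x k - pool2 f I x' k) ^ 2) := by
  intro x x'
  classical
  -- the pool enumerations
  set e : Fin K → Fin L → Fin M :=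
    fun k i => (((I k).equivFinOfCardEq (hcard k)).symm i : Fin M) with he_def
  have he_mem : ∀ k i, e k i ∈ I k := fun k i => (((I k).equivFinOfCardEq (hcard k)).symm i).2
  have he_inj : ∀ k, Function.Injective (e k) := fun k i j h =>
    ((I k).equivFinOfCardEq (hcard k)).symm.injective (Subtype.coe_injective h)
  have hbij : Function.Bijective (fun p : Fin K × Fin L => e p.1 p.2) := by
    constructor
    · rintro ⟨k, i⟩ ⟨k', i'⟩ h
      simp only at h
      by_cases hk : k = k'
      · subst hk
        exact Prod.ext rfl (he_inj k h)
      · exact absurd (he_mem k i) (by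
          rw [h]
          exact Finset.disjoint_right.mp (hdisj k k' hk) (he_mem k' i'))
    · intro j
      obtain ⟨k, hjk⟩ := hcover j
      refine ⟨(k, (I k).equivFinOfCardEq (hcard k) ⟨j, hjk⟩), ?_⟩
      simp only [he_def, Equiv.symm_apply_apply]
  set Φ : (Fin K × Fin L) ≃ Fin M := Equiv.ofBijective _ hbij with hΦ_def
  have hΦ_app : ∀ k i, Φ (k, i) = e k i := fun k i => rfl
  have hΦ_symm : ∀ k i, Φ.symm (e k i) = (k, i) := fun k i => by
    rw [← hΦ_app k i, Equiv.symm_apply_apply]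
  set av : Fin K → Fin L → ℝ := fun k i => ⟪x, f (e k i)⟫ with hav
  set bv : Fin K → Fin L → ℝ := fun k i => ⟪x', f (e k i)⟫ with hbv
  have hUε : ∀ k, ∃ (U : Matrix (Fin L) (Fin L) ℝ) (ε : Fin L → ℝ),
      Uᵀ * U = 1 ∧ (∀ i, ε i = 1 ∨ ε i = -1) ∧
      ∑ i, (U.mulVec (av k) i - ε i * U.mulVec (bv k) i) ^ 2
        = (Real.sqrt (∑ i, av k i ^ 2) - Real.sqrt (∑ i, bv k i ^ 2)) ^ 2 :=
    fun k => exists_good_matrix (av k) (bv k)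
  choose U ε hUorth hεpm hkey using hUε
  set f' : Fin M → EuclideanSpace ℝ (Fin N) :=
    fun j => ∑ b, U (Φ.symm j).1 (Φ.symm j).2 b • f (e (Φ.symm j).1 b) with hf'_def
  have hf'e : ∀ k i, f' (e k i) = ∑ b, U k i b • f (e k b) := by
    intro k i
    show (∑ b, U (Φ.symm (e k i)).1 (Φ.symm (e k i)).2 b • f (e (Φ.symm (e k i)).1 b)) = _
    rw [hΦ_symm k i]
  have hQ2 : InQ2 (L := L) f f' I := ⟨e, U, he_inj, he_mem, hUorth, hf'e⟩
  set εg : Fin M → ℝ := fun j => ε (Φ.symm j).1 (Φ.symm j).2 with hεg_def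
  set Ω : Finset (Fin M) := Finset.univ.filter (fun j => εg j = 1) with hΩ_def
  set S : Set ℝ := {r : ℝ | ∃ (f' : Fin M → EuclideanSpace ℝ (Fin N)) (Ω : Finset (Fin M)),
      InQ2 (L := L) f f' I ∧
      r = Real.sqrt (lowerFrameBound f' Ω ^ 2 + lowerFrameBound f' Ωᶜ ^ 2)} with hS_def
  have hmem : Real.sqrt (lowerFrameBound f' Ω ^ 2 + lowerFrameBound f' Ωᶜ ^ 2) ∈ S :=
    ⟨f', Ω, hQ2, rfl⟩
  have hSb : BddBelow S := by
    refine ⟨0, ?_⟩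
    rintro r ⟨g, Ω', _, rfl⟩
    exact Real.sqrt_nonneg _
  have hd0 : 0 ≤ sdist x x' := le_min (norm_nonneg _) (norm_nonneg _)
  have hd1 : sdist x x' ≤ ‖x - x'‖ := min_le_left _ _
  have hd2 : sdist x x' ≤ ‖x + x'‖ := min_le_right _ _
  set lam1 : ℝ := lowerFrameBound f' Ω with hl1
  set lam2 : ℝ := lowerFrameBound f' Ωᶜ with hl2
  have hlam1 : 0 ≤ lam1 := lfb_nonneg f' Ω
  have hlam2 : 0 ≤ lam2 := lfb_nonneg f' Ωᶜ
  -- inner products with f'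
  have hinx : ∀ k i, ⟪x, f' (e k i)⟫ = (U k).mulVec (av k) i := by
    intro k i
    rw [hf'e, inner_sum]
    simp only [real_inner_smul_right]
    simp [Matrix.mulVec, dotProduct, hav]
  have hinx' : ∀ k i, ⟪x', f' (e k i)⟫ = (U k).mulVec (bv k) i := by
    intro k i
    rw [hf'e, inner_sum]
    simp only [real_inner_smul_right]
    simp [Matrix.mulVec, dotProduct, hbv]
  -- the big splitting identity
  set H : Fin M → ℝ := fun j => (⟪x, f' j⟫ - εg j * ⟪x', f' j⟫) ^ 2 with hH_def
  have hHΩ : ∀ j ∈ Ω, ⟪x - x', f' j⟫ ^ 2 = H j := by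
    intro j hj
    have h1 : εg j = 1 := (Finset.mem_filter.mp hj).2
    rw [hH_def]
    simp only
    rw [h1, inner_sub_left]
    ring
  have hHΩc : ∀ j ∈ Ωᶜ, ⟪x + x', f' j⟫ ^ 2 = H j := by
    intro j hj
    have hnot : ¬ (εg j = 1) := by
      intro h
      exact (Finset.mem_compl.mp hj) (Finset.mem_filter.mpr ⟨Finset.mem_univ j, h⟩)
    have h1 : εg j = -1 := (hεpm (Φ.symm j).1 (Φ.symm j).2).resolve_left hnot
    rw [hH_def]
    simp only
    rw [h1, inner_add_left]
    ring
  have hpool : ∀ k, ∑ i, H (e k i) = (pool2 f I x k - pool2 f I x' k) ^ 2 := by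
    intro k
    have h1 : ∀ i, H (e k i)
        = ((U k).mulVec (av k) i - ε k i * (U k).mulVec (bv k) i) ^ 2 := by
      intro i
      rw [hH_def]
      simp only
      rw [hinx k i, hinx' k i, hεg_def]
      simp only [hΦ_symm k i]
    rw [Finset.sum_congr rfl fun i _ => h1 i, hkey k]
    have hpx : pool2 f I x k = Real.sqrt (∑ i, av k i ^ 2) := by
      unfold pool2
      congr 1
      rw [← Finset.sum_coe_sort (I k) (fun j => ⟪x, f j⟫ ^ 2),
        ← Equiv.sum_comp ((I k).equivFinOfCardEq (hcard k)).symm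
          (fun j => ⟪x, f (j : Fin M)⟫ ^ 2)]
    have hpx' : pool2 f I x' k = Real.sqrt (∑ i, bv k i ^ 2) := by
      unfold pool2
      congr 1
      rw [← Finset.sum_coe_sort (I k) (fun j => ⟪x', f j⟫ ^ 2),
        ← Equiv.sum_comp ((I k).equivFinOfCardEq (hcard k)).symm
          (fun j => ⟪x', f (j : Fin M)⟫ ^ 2)]
    rw [hpx, hpx']
  have hsplit : (∑ j ∈ Ω, ⟪x - x', f' j⟫ ^ 2) + (∑ j ∈ Ωᶜ, ⟪x + x', f' j⟫ ^ 2)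
      = ∑ k, (pool2 f I x k - pool2 f I x' k) ^ 2 := by
    rw [Finset.sum_congr rfl hHΩ, Finset.sum_congr rfl hHΩc,
      Finset.sum_add_sum_compl Ω H]
    rw [← Equiv.sum_comp Φ H, Fintype.sum_prod_type]
    exact Finset.sum_congr rfl fun k _ => hpool k
  -- the inequality chain
  have hc1 : (lam1 * sdist x x') ^ 2 ≤ ∑ j ∈ Ω, ⟪x - x', f' j⟫ ^ 2 := by
    have h := le_trans (mul_le_mul_of_nonneg_left hd1 hlam1) (lfb_spec f' Ω (x - x'))
    have h2 := pow_le_pow_left₀ (mul_nonneg hlam1 hd0) h 2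
    rwa [Real.sq_sqrt (Finset.sum_nonneg fun j _ => sq_nonneg _)] at h2
  have hc2 : (lam2 * sdist x x') ^ 2 ≤ ∑ j ∈ Ωᶜ, ⟪x + x', f' j⟫ ^ 2 := by
    have h := le_trans (mul_le_mul_of_nonneg_left hd2 hlam2) (lfb_spec f' Ωᶜ (x + x'))
    have h2 := pow_le_pow_left₀ (mul_nonneg hlam2 hd0) h 2
    rwa [Real.sq_sqrt (Finset.sum_nonneg fun j _ => sq_nonneg _)] at h2
  have hr : Real.sqrt (lam1 ^ 2 + lam2 ^ 2) * sdist x x'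
      ≤ Real.sqrt (∑ k, (pool2 f I x k - pool2 f I x' k) ^ 2) := by
    have heq : Real.sqrt (lam1 ^ 2 + lam2 ^ 2) * sdist x x'
        = Real.sqrt ((lam1 * sdist x x') ^ 2 + (lam2 * sdist x x') ^ 2) := by
      rw [← Real.sqrt_sq hd0, ← Real.sqrt_mul (by positivity)]
      rw [Real.sqrt_sq hd0]
      congr 1
      ring
    rw [heq, ← hsplit]
    exact Real.sqrt_le_sqrt (add_le_add hc1 hc2)
  exact le_trans (mul_le_mul_of_nonneg_right (csInf_le hSb hmem) hd0) hr
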